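/- Lemma 2: let f : A ⊢ B be an arrow term of DS such that an occurrence x of a letter p in A is linked in f to an occurrence y of p in B. Then it is impossible that A has a subformula occurrence of the form x∧A′ or A′∧x and B has a subformula occurrence of the form y∨B′ or B′∨y. -/

import Mathlib

/-! ### The category Br of Brauerian split equivalences of finite ordinals

An arrow `m ⊢ n` of `Br` is represented as a relation on `ℕ ⊕ ℕ`, where
`Sum.inl i` (with `i < m`) is the source copy `i_s` and `Sum.inr j`
(with `j < n`) is the target copy `j_t`. -/

abbrev GRel : Type := (ℕ ⊕ ℕ) → (ℕ ⊕ ℕ) → Prop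

/-- The identity arrow of `Br` on `n`: transversals `{i_s, i_t}` for `i < n`. -/
def gId (n : ℕ) : GRel := fun u v =>
  ∃ i, i < n ∧ (u = Sum.inl i ∨ u = Sum.inr i) ∧ (v = Sum.inl i ∨ v = Sum.inr i)

/-- The Brauerian split equivalence whose transversals are `{i_s, (φ i)_t}` for `i < m`. -/
def gFun (m : ℕ) (φ : ℕ → ℕ) : GRel := fun u v =>
  ∃ i, i < m ∧ (u = Sum.inl i ∨ u = Sum.inr (φ i)) ∧ (v = Sum.inl i ∨ v = Sum.inr (φ i))

/-- The block transposition exchanging the first `a` and the last `b` elements. -/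
def gSwap (a b : ℕ) : GRel :=
  gFun (a + b) (fun i => if i < a then i + b else i - a)

/-- `G Δ̂∧_{B,A}` with `a = GA`, `b = GB`: identity transversals on the stem `A`
together with caps joining the two copies of each letter occurrence of `B` in
the crown `¬B ∨ B` of the target. -/
def gDelta (a b : ℕ) : GRel := fun u v =>
  (∃ i, i < a ∧ (u = Sum.inl i ∨ u = Sum.inr i) ∧ (v = Sum.inl i ∨ v = Sum.inr i)) ∨
  (∃ j, j < b ∧ (u = Sum.inr (a + j) ∨ u = Sum.inr (a + b + j)) ∧
                (v = Sum.inr (a + j) ∨ v = Sum.inr (a + b + j)))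

/-- `G Σ̂∨_{B,A}` with `a = GA`, `b = GB`: identity transversals on the stem `A`
together with cups joining the two copies of each letter occurrence of `B` in
the crown `B ∧ ¬B` of the source. -/
def gSigma (a b : ℕ) : GRel := fun u v =>
  (∃ i, i < a ∧ (u = Sum.inl (2*b + i) ∨ u = Sum.inr i) ∧
                (v = Sum.inl (2*b + i) ∨ v = Sum.inr i)) ∨
  (∃ j, j < b ∧ (u = Sum.inl j ∨ u = Sum.inl (b + j)) ∧
                (v = Sum.inl j ∨ v = Sum.inl (b + j)))

/-- Composition `P ∗ R` in `Br`: glue along the middle copy and take the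
transitive closure, restricted to the outer copies. -/
def gComp (Pr R : GRel) : GRel := fun u v =>
  Relation.TransGen
    (fun x y : ℕ ⊕ ℕ ⊕ ℕ =>
      (∃ x' y', Sum.map id Sum.inl x' = x ∧ Sum.map id Sum.inl y' = y ∧ R x' y') ∨
      (∃ x' y', Sum.inr x' = x ∧ Sum.inr y' = y ∧ Pr x' y'))
    (Sum.map id Sum.inr u) (Sum.map id Sum.inr v)

/-- Shift a split relation by `a` on the source side and by `d` on the target side. -/
def gShift (a d : ℕ) (R : GRel) : GRel := fun u v =>
  ∃ u' v', R u' v' ∧ u = Sum.map (· + a) (· + d) u' ∧ v = Sum.map (· + a) (· + d) v'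

/-- Disjoint union of split relations: `G(f ξ g) = Gf ∪ Gg_{+GD}^{+GA}`. -/
def gPar (a d : ℕ) (R S : GRel) : GRel := fun u v => R u v ∨ gShift a d S u v
/-! ### The language L∧,∨ generated from the set `P` of letters -/

inductive Form (P : Type) : Type
  | letter : P → Form P
  | conj : Form P → Form P → Form P
  | disj : Form P → Form P → Form P

infixr:70 " ⋏ " => Form.conj
infixr:66 " ⋎ " => Form.disj

/-- The number of occurrences of letters in a formula (the object map of `G`). -/
def Form.size {P : Type} : Form P → ℕ
  | .letter _ => 1
  | .conj A B => A.size + B.size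
  | .disj A B => A.size + B.size
/-! ### Arrow terms of the free symmetric net category DS -/

inductive Term (P : Type) : Form P → Form P → Type
  | id (A : Form P) : Term P A A
  | comp {A B C : Form P} : Term P B C → Term P A B → Term P A C
  | conj {A B D E : Form P} : Term P A D → Term P B E → Term P (A ⋏ B) (D ⋏ E)
  | disj {A B D E : Form P} : Term P A D → Term P B E → Term P (A ⋎ B) (D ⋎ E)
  | bConjTo (A B C : Form P) : Term P (A ⋏ (B ⋏ C)) ((A ⋏ B) ⋏ C)
  | bConjFrom (A B C : Form P) : Term P ((A ⋏ B) ⋏ C) (A ⋏ (B ⋏ C))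
  | bDisjTo (A B C : Form P) : Term P (A ⋎ (B ⋎ C)) ((A ⋎ B) ⋎ C)
  | bDisjFrom (A B C : Form P) : Term P ((A ⋎ B) ⋎ C) (A ⋎ (B ⋎ C))
  | cConj (A B : Form P) : Term P (A ⋏ B) (B ⋏ A)
  | cDisj (A B : Form P) : Term P (B ⋎ A) (A ⋎ B)
  | d (A B C : Form P) : Term P (A ⋏ (B ⋎ C)) ((A ⋏ B) ⋎ C)

infixr:80 " ⬝ " => Term.comp
infixr:70 " ⊼ " => Term.conj
infixr:66 " ⊽ " => Term.disj

/-- The arrow `d^R_{C,B,A} : (C∨B)∧A ⊢ C∨(B∧A)`. -/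
def dR {P : Type} (C B A : Form P) : Term P ((C ⋎ B) ⋏ A) (C ⋎ (B ⋏ A)) :=
  Term.cDisj C (B ⋏ A) ⬝ ((Term.cConj A B ⊽ Term.id C) ⬝
    (Term.d A B C ⬝ ((Term.id A ⊼ Term.cDisj B C) ⬝ Term.cConj (C ⋎ B) A)))
/-! ### The equations of DS, imposed on arrow terms -/

inductive Eqv {P : Type} : ∀ {A B : Form P}, Term P A B → Term P A B → Prop
  -- equivalence and congruence
  | refl {A B : Form P} (f : Term P A B) : Eqv f f
  | symm {A B : Form P} {f g : Term P A B} : Eqv f g → Eqv g f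
  | trans {A B : Form P} {f g h : Term P A B} : Eqv f g → Eqv g h → Eqv f h
  | congComp {A B C : Form P} {g g' : Term P B C} {f f' : Term P A B} :
      Eqv g g' → Eqv f f' → Eqv (g ⬝ f) (g' ⬝ f')
  | congConj {A B D E : Form P} {f f' : Term P A D} {g g' : Term P B E} :
      Eqv f f' → Eqv g g' → Eqv (f ⊼ g) (f' ⊼ g')
  | congDisj {A B D E : Form P} {f f' : Term P A D} {g g' : Term P B E} :
      Eqv f f' → Eqv g g' → Eqv (f ⊽ g) (f' ⊽ g')
  -- (cat 1), (cat 2)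
  | catIdR {A B : Form P} (f : Term P A B) : Eqv (f ⬝ Term.id A) f
  | catIdL {A B : Form P} (f : Term P A B) : Eqv (Term.id B ⬝ f) f
  | catAssoc {A B C D : Form P} (f : Term P A B) (g : Term P B C) (h : Term P C D) :
      Eqv (h ⬝ (g ⬝ f)) ((h ⬝ g) ⬝ f)
  -- bifunctorial equations (ξ 1), (ξ 2)
  | conjOne (A B : Form P) : Eqv (Term.id A ⊼ Term.id B) (Term.id (A ⋏ B))
  | disjOne (A B : Form P) : Eqv (Term.id A ⊽ Term.id B) (Term.id (A ⋎ B))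
  | conjTwo {A₁ B₁ C₁ A₂ B₂ C₂ : Form P} (g₁ : Term P B₁ C₁) (f₁ : Term P A₁ B₁)
      (g₂ : Term P B₂ C₂) (f₂ : Term P A₂ B₂) :
      Eqv ((g₁ ⬝ f₁) ⊼ (g₂ ⬝ f₂)) ((g₁ ⊼ g₂) ⬝ (f₁ ⊼ f₂))
  | disjTwo {A₁ B₁ C₁ A₂ B₂ C₂ : Form P} (g₁ : Term P B₁ C₁) (f₁ : Term P A₁ B₁)
      (g₂ : Term P B₂ C₂) (f₂ : Term P A₂ B₂) :
      Eqv ((g₁ ⬝ f₁) ⊽ (g₂ ⬝ f₂)) ((g₁ ⊽ g₂) ⬝ (f₁ ⊽ f₂))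
  -- naturality equations
  | bConjNat {A B C D E F : Form P} (f : Term P A D) (g : Term P B E) (h : Term P C F) :
      Eqv (((f ⊼ g) ⊼ h) ⬝ Term.bConjTo A B C) (Term.bConjTo D E F ⬝ (f ⊼ (g ⊼ h)))
  | bDisjNat {A B C D E F : Form P} (f : Term P A D) (g : Term P B E) (h : Term P C F) :
      Eqv (((f ⊽ g) ⊽ h) ⬝ Term.bDisjTo A B C) (Term.bDisjTo D E F ⬝ (f ⊽ (g ⊽ h)))
  | cConjNat {A B D E : Form P} (f : Term P A D) (g : Term P B E) :
      Eqv ((g ⊼ f) ⬝ Term.cConj A B) (Term.cConj D E ⬝ (f ⊼ g))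
  | cDisjNat {A B D E : Form P} (f : Term P A D) (g : Term P B E) :
      Eqv ((g ⊽ f) ⬝ Term.cDisj B A) (Term.cDisj E D ⬝ (f ⊽ g))
  | dNat {A B C D E F : Form P} (f : Term P A D) (g : Term P B E) (h : Term P C F) :
      Eqv (((f ⊼ g) ⊽ h) ⬝ Term.d A B C) (Term.d D E F ⬝ (f ⊼ (g ⊽ h)))
  -- (b̂ξ b̂ξ)
  | bConjIso₁ (A B C : Form P) :
      Eqv (Term.bConjFrom A B C ⬝ Term.bConjTo A B C) (Term.id (A ⋏ (B ⋏ C)))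
  | bConjIso₂ (A B C : Form P) :
      Eqv (Term.bConjTo A B C ⬝ Term.bConjFrom A B C) (Term.id ((A ⋏ B) ⋏ C))
  | bDisjIso₁ (A B C : Form P) :
      Eqv (Term.bDisjFrom A B C ⬝ Term.bDisjTo A B C) (Term.id (A ⋎ (B ⋎ C)))
  | bDisjIso₂ (A B C : Form P) :
      Eqv (Term.bDisjTo A B C ⬝ Term.bDisjFrom A B C) (Term.id ((A ⋎ B) ⋎ C))
  -- (b̂ξ 5)
  | bConjPent (A B C D : Form P) :
      Eqv (Term.bConjFrom A B (C ⋏ D) ⬝ Term.bConjFrom (A ⋏ B) C D)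
        ((Term.id A ⊼ Term.bConjFrom B C D) ⬝
          (Term.bConjFrom A (B ⋏ C) D ⬝ (Term.bConjFrom A B C ⊼ Term.id D)))
  | bDisjPent (A B C D : Form P) :
      Eqv (Term.bDisjFrom A B (C ⋎ D) ⬝ Term.bDisjFrom (A ⋎ B) C D)
        ((Term.id A ⊽ Term.bDisjFrom B C D) ⬝
          (Term.bDisjFrom A (B ⋎ C) D ⬝ (Term.bDisjFrom A B C ⊽ Term.id D)))
  -- (ĉ∧ ĉ∧), (ĉ∨ ĉ∨)
  | cConjIso (A B : Form P) : Eqv (Term.cConj B A ⬝ Term.cConj A B) (Term.id (A ⋏ B))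
  | cDisjIso (A B : Form P) : Eqv (Term.cDisj A B ⬝ Term.cDisj B A) (Term.id (A ⋎ B))
  -- (b̂∧ ĉ∧), (b̂∨ ĉ∨)
  | bcConj (A B C : Form P) :
      Eqv ((Term.id B ⊼ Term.cConj C A) ⬝ (Term.bConjFrom B C A ⬝
            (Term.cConj A (B ⋏ C) ⬝ (Term.bConjFrom A B C ⬝ (Term.cConj B A ⊼ Term.id C)))))
        (Term.bConjFrom B A C)
  | bcDisj (A B C : Form P) :
      Eqv ((Term.id B ⊽ Term.cDisj A C) ⬝ (Term.bDisjFrom B C A ⬝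
            (Term.cDisj (B ⋎ C) A ⬝ (Term.bDisjFrom A B C ⬝ (Term.cDisj A B ⊽ Term.id C)))))
        (Term.bDisjFrom B A C)
  -- (d ∧), (d ∨)
  | dConj (A B C D : Form P) :
      Eqv ((Term.bConjFrom A B C ⊽ Term.id D) ⬝ Term.d (A ⋏ B) C D)
        (Term.d A (B ⋏ C) D ⬝ ((Term.id A ⊼ Term.d B C D) ⬝ Term.bConjFrom A B (C ⋎ D)))
  | dDisj (D C B A : Form P) :
      Eqv (Term.d D C (B ⋎ A) ⬝ (Term.id D ⊼ Term.bDisjFrom C B A))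
        (Term.bDisjFrom (D ⋏ C) B A ⬝ ((Term.d D C B ⊽ Term.id A) ⬝ Term.d D (C ⋎ B) A))
  -- (d b̂∧), (d b̂∨)
  | dBConj (A B C D : Form P) :
      Eqv (dR (A ⋏ B) C D ⬝ (Term.d A B C ⊼ Term.id D))
        (Term.d A B (C ⋏ D) ⬝ ((Term.id A ⊼ dR B C D) ⬝ Term.bConjFrom A (B ⋎ C) D))
  | dBDisj (D C B A : Form P) :
      Eqv ((Term.id D ⊽ Term.d C B A) ⬝ dR D C (B ⋎ A))
        (Term.bDisjFrom D (C ⋏ B) A ⬝ ((dR D C B ⊽ Term.id A) ⬝ Term.d (D ⋎ C) B A))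
/-- The functor `G` from DS to Br on arrow terms. -/
def Term.G {P : Type} : ∀ {A B : Form P}, Term P A B → GRel
  | _, _, .id A => gId A.size
  | _, _, .comp g f => gComp (Term.G g) (Term.G f)
  | _, _, @Term.conj _ A _ D _ f g => gPar A.size D.size (Term.G f) (Term.G g)
  | _, _, @Term.disj _ A _ D _ f g => gPar A.size D.size (Term.G f) (Term.G g)
  | _, _, .bConjTo A B C => gId (A.size + (B.size + C.size))
  | _, _, .bConjFrom A B C => gId (A.size + B.size + C.size)
  | _, _, .bDisjTo A B C => gId (A.size + (B.size + C.size))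
  | _, _, .bDisjFrom A B C => gId (A.size + B.size + C.size)
  | _, _, .cConj A B => gSwap A.size B.size
  | _, _, .cDisj A B => gSwap B.size A.size
  | _, _, .d A B C => gId (A.size + (B.size + C.size))
/-! ### Occurrences of letters and subformula occurrences -/

/-- The letter at the `(n+1)`-th letter-occurrence position of a formula
(`n` counted from `0`, from the left). -/
def Form.letterAt {P : Type} : Form P → ℕ → Option P
  | .letter p, 0 => some p
  | .letter _, _ + 1 => none
  | .conj A B, n => if n < A.size then A.letterAt n else B.letterAt (n - A.size)
  | .disj A B, n => if n < A.size then A.letterAt n else B.letterAt (n - A.size)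

/-- Directions for addressing subformula occurrences. -/
inductive Dir : Type
  | l
  | r
deriving DecidableEq

/-- The subformula occurrence of a formula at a given position (path). -/
def Form.subAt {P : Type} : Form P → List Dir → Option (Form P)
  | A, [] => some A
  | .conj A _, .l :: π => A.subAt π
  | .conj _ B, .r :: π => B.subAt π
  | .disj A _, .l :: π => A.subAt π
  | .disj _ B, .r :: π => B.subAt π
  | .letter _, _ :: _ => none

/-- The number of letter occurrences strictly to the left of the subformula
occurrence at a given position. -/
def Form.offsetAt {P : Type} : Form P → List Dir → ℕ
  | _, [] => 0
  | .conj A _, .l :: π => A.offsetAt π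
  | .conj A B, .r :: π => A.size + B.offsetAt π
  | .disj A _, .l :: π => A.offsetAt π
  | .disj A B, .r :: π => A.size + B.offsetAt π
  | .letter _, _ :: _ => 0

/-- The `(n+1)`-th occurrence of a letter in `A` is *linked* in `f : A ⊢ B` to the
`(m+1)`-th occurrence of the same letter in `B` when `{n_s, m_t}` is a member of
the partition corresponding to `Gf`. -/
def Linked {P : Type} {A B : Form P} (f : Term P A B) (n m : ℕ) : Prop :=
  Term.G f (Sum.inl n) (Sum.inr m)

/-! ### Auxiliary development for Lemma 2 -/

namespace Form
variable {P : Type}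

/-- `A` is a single letter. -/
def isL : Form P → Prop
  | .letter _ => True
  | _ => False

/-- The `(n+1)`-th letter occurrence of `A` is an immediate conjunct
(its parent connective is `∧`). -/
def cc : Form P → ℕ → Prop
  | .letter _, _ => False
  | .conj A B, n =>
      if n < A.size then A.isL ∨ A.cc n
      else n - A.size < B.size ∧ (B.isL ∨ B.cc (n - A.size))
  | .disj A B, n =>
      if n < A.size then A.cc n else B.cc (n - A.size)

/-- The `(n+1)`-th letter occurrence of `A` is an immediate disjunct
(its parent connective is `∨`). -/
def dc : Form P → ℕ → Prop
  | .letter _, _ => False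
  | .conj A B, n =>
      if n < A.size then A.dc n else B.dc (n - A.size)
  | .disj A B, n =>
      if n < A.size then A.isL ∨ A.dc n
      else n - A.size < B.size ∧ (B.isL ∨ B.dc (n - A.size))

lemma size_pos (A : Form P) : 0 < A.size := by
  induction A <;> simp [Form.size] <;> omega

lemma isL_size {A : Form P} (h : A.isL) : A.size = 1 := by
  cases A <;> simp [isL, size] at h ⊢

lemma size_isL {A : Form P} (h : A.size = 1) : A.isL := by
  cases A with
  | letter p => trivial
  | conj A B => exfalso; have := size_pos A; have := size_pos B; simp [size] at h; omega
  | disj A B => exfalso; have := size_pos A; have := size_pos B; simp [size] at h; omega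

lemma cc_isL {A : Form P} (h : A.isL) (n : ℕ) : ¬ A.cc n := by
  cases A <;> simp [isL, cc] at h ⊢

lemma dc_isL {A : Form P} (h : A.isL) (n : ℕ) : ¬ A.dc n := by
  cases A <;> simp [isL, dc] at h ⊢

lemma cc_lt : ∀ {A : Form P} {n : ℕ}, A.cc n → n < A.size := by
  intro A
  induction A with
  | letter p => simp [cc]
  | conj A B ihA ihB =>
      intro n h; simp only [cc] at h; simp only [size]
      split at h
      · omega
      · omega
  | disj A B ihA ihB =>
      intro n h; simp only [cc] at h; simp only [size]
      split at h
      · omega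
      · have := ihB h; omega

lemma dc_lt : ∀ {A : Form P} {n : ℕ}, A.dc n → n < A.size := by
  intro A
  induction A with
  | letter p => simp [dc]
  | conj A B ihA ihB =>
      intro n h; simp only [dc] at h; simp only [size]
      split at h
      · omega
      · have := ihB h; omega
  | disj A B ihA ihB =>
      intro n h; simp only [dc] at h; simp only [size]
      split at h
      · omega
      · omega

lemma not_cc_dc : ∀ (A : Form P) (n : ℕ), A.cc n → A.dc n → False := by
  intro A
  induction A with
  | letter p => simp [cc]
  | conj A B ihA ihB =>
      intro n hc hd; simp only [cc] at hc; simp only [dc] at hd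
      split_ifs at hc hd with h
      · rcases hc with h' | h'
        · exact dc_isL h' _ hd
        · exact ihA _ h' hd
      · rcases hc.2 with h' | h'
        · exact dc_isL h' _ hd
        · exact ihB _ h' hd
  | disj A B ihA ihB =>
      intro n hc hd; simp only [cc] at hc; simp only [dc] at hd
      split_ifs at hc hd with h
      · rcases hd with h' | h'
        · exact cc_isL h' _ hc
        · exact ihA _ hc h'
      · rcases hd.2 with h' | h'
        · exact cc_isL h' _ hc
        · exact ihB _ hc h'

end Form
namespace Form
variable {P : Type} {A B C : Form P} {n : ℕ}

lemma cc_assoc_conj : cc (A ⋏ (B ⋏ C)) n ↔ cc ((A ⋏ B) ⋏ C) n := by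
  simp only [cc, size, isL]
  split_ifs <;> simp_all [Nat.sub_sub] <;> omega

lemma dc_assoc_conj : dc (A ⋏ (B ⋏ C)) n ↔ dc ((A ⋏ B) ⋏ C) n := by
  simp only [dc, size, isL]
  split_ifs <;> simp_all [Nat.sub_sub] <;> omega

lemma cc_assoc_disj : cc (A ⋎ (B ⋎ C)) n ↔ cc ((A ⋎ B) ⋎ C) n := by
  simp only [cc, size, isL]
  split_ifs <;> simp_all [Nat.sub_sub] <;> omega

lemma dc_assoc_disj : dc (A ⋎ (B ⋎ C)) n ↔ dc ((A ⋎ B) ⋎ C) n := by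
  simp only [dc, size, isL]
  split_ifs <;> simp_all [Nat.sub_sub] <;> omega

lemma cc_d : cc (A ⋏ (B ⋎ C)) n → cc ((A ⋏ B) ⋎ C) n := by
  simp only [cc, size, isL]
  split_ifs <;> simp_all [Nat.sub_sub] <;> omega

lemma dc_d : dc ((A ⋏ B) ⋎ C) n → dc (A ⋏ (B ⋎ C)) n := by
  simp only [dc, size, isL]
  intro h
  split_ifs at h ⊢ <;> simp_all [Nat.sub_sub] <;> omega

lemma cc_comm_conj (h : n < A.size + B.size) :
    cc (A ⋏ B) n ↔ cc (B ⋏ A) (if n < A.size then n + B.size else n - A.size) := by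
  simp only [cc, size, isL]
  split_ifs <;> simp_all [Nat.add_sub_cancel] <;> omega

lemma dc_comm_conj (h : n < A.size + B.size) :
    dc (A ⋏ B) n ↔ dc (B ⋏ A) (if n < A.size then n + B.size else n - A.size) := by
  simp only [dc, size, isL]
  split_ifs <;> simp_all [Nat.add_sub_cancel] <;> omega

lemma cc_comm_disj (h : n < A.size + B.size) :
    cc (A ⋎ B) n ↔ cc (B ⋎ A) (if n < A.size then n + B.size else n - A.size) := by
  simp only [cc, size, isL]
  split_ifs <;> simp_all [Nat.add_sub_cancel] <;> omega

lemma dc_comm_disj (h : n < A.size + B.size) :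
    dc (A ⋎ B) n ↔ dc (B ⋎ A) (if n < A.size then n + B.size else n - A.size) := by
  simp only [dc, size, isL]
  split_ifs <;> simp_all [Nat.add_sub_cancel] <;> omega

end Form

lemma Term.size_eq {P : Type} : ∀ {A B : Form P}, Term P A B → A.size = B.size := by
  intro A B f
  induction f <;> simp_all [Form.size] <;> omega
/-! ### Relation algebra for `gFun` -/

lemma gId_fun (n : ℕ) (u v : ℕ ⊕ ℕ) : gId n u v ↔ gFun n (fun i => i) u v := Iff.rfl

lemma gPar_congr {R R' S S' : GRel} (a d : ℕ)
    (hR : ∀ u v, R u v ↔ R' u v) (hS : ∀ u v, S u v ↔ S' u v) (u v : ℕ ⊕ ℕ) :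
    gPar a d R S u v ↔ gPar a d R' S' u v := by
  unfold gPar gShift
  constructor
  · rintro (h | ⟨u', v', h, rfl, rfl⟩)
    · exact Or.inl ((hR _ _).1 h)
    · exact Or.inr ⟨u', v', (hS _ _).1 h, rfl, rfl⟩
  · rintro (h | ⟨u', v', h, rfl, rfl⟩)
    · exact Or.inl ((hR _ _).2 h)
    · exact Or.inr ⟨u', v', (hS _ _).2 h, rfl, rfl⟩

lemma gComp_congr {Pr Pr' R R' : GRel}
    (hP : ∀ u v, Pr u v ↔ Pr' u v) (hR : ∀ u v, R u v ↔ R' u v) (u v : ℕ ⊕ ℕ) :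
    gComp Pr R u v ↔ gComp Pr' R' u v := by
  unfold gComp
  constructor
  · refine fun h => Relation.TransGen.mono ?_ _ _ h
    rintro x y (⟨x', y', hx, hy, h⟩ | ⟨x', y', hx, hy, h⟩)
    · exact Or.inl ⟨x', y', hx, hy, (hR _ _).1 h⟩
    · exact Or.inr ⟨x', y', hx, hy, (hP _ _).1 h⟩
  · refine fun h => Relation.TransGen.mono ?_ _ _ h
    rintro x y (⟨x', y', hx, hy, h⟩ | ⟨x', y', hx, hy, h⟩)
    · exact Or.inl ⟨x', y', hx, hy, (hR _ _).2 h⟩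
    · exact Or.inr ⟨x', y', hx, hy, (hP _ _).2 h⟩

lemma gPar_fun (a b d : ℕ) (φ ψ : ℕ → ℕ) (u v : ℕ ⊕ ℕ) :
    gPar a d (gFun a φ) (gFun b ψ) u v ↔
      gFun (a + b) (fun i => if i < a then φ i else ψ (i - a) + d) u v := by
  constructor
  · rintro (⟨i, hi, hu, hv⟩ | ⟨u', v', ⟨j, hj, hu', hv'⟩, rfl, rfl⟩)
    · refine ⟨i, by omega, ?_, ?_⟩ <;> simp only [if_pos hi] <;> assumption
    · refine ⟨j + a, by omega, ?_, ?_⟩ <;>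
        simp only [if_neg (by omega : ¬ j + a < a), Nat.add_sub_cancel]
      · rcases hu' with rfl | rfl <;> simp [Sum.map]
      · rcases hv' with rfl | rfl <;> simp [Sum.map]
  · rintro ⟨i, hi, hu, hv⟩
    by_cases h : i < a
    · exact Or.inl ⟨i, h, by simpa [if_pos h] using hu, by simpa [if_pos h] using hv⟩
    · right
      simp only [if_neg h] at hu hv
      refine ⟨(match u with | Sum.inl _ => Sum.inl (i - a) | Sum.inr _ => Sum.inr (ψ (i - a))),
              (match v with | Sum.inl _ => Sum.inl (i - a) | Sum.inr _ => Sum.inr (ψ (i - a))),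
              ⟨i - a, by omega, ?_, ?_⟩, ?_, ?_⟩
      · rcases hu with rfl | rfl <;> simp
      · rcases hv with rfl | rfl <;> simp
      · rcases hu with rfl | rfl <;> simp [Sum.map] <;> omega
      · rcases hv with rfl | rfl <;> simp [Sum.map] <;> omega
section Comp
variable (a b : ℕ) (φ ψ : ℕ → ℕ)

/-- The step relation of `gComp (gFun b ψ) (gFun a φ)`. -/
private def cStep : (ℕ ⊕ ℕ ⊕ ℕ) → (ℕ ⊕ ℕ ⊕ ℕ) → Prop := fun x y =>
  (∃ x' y', Sum.map id Sum.inl x' = x ∧ Sum.map id Sum.inl y' = y ∧ gFun a φ x' y') ∨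
  (∃ x' y', Sum.inr x' = x ∧ Sum.inr y' = y ∧ gFun b ψ x' y')

/-- The triad of `i`: the three nodes on its thread. -/
private def cT (i : ℕ) : (ℕ ⊕ ℕ ⊕ ℕ) → Prop := fun x =>
  x = Sum.inl i ∨ x = Sum.inr (Sum.inl (φ i)) ∨ x = Sum.inr (Sum.inr (ψ (φ i)))

variable {a b φ ψ}

private lemma cT_step (hφ : ∀ i, i < a → φ i < b)
    (hφi : ∀ i j, i < a → j < a → φ i = φ j → i = j)
    (hψi : ∀ i j, i < b → j < b → ψ i = ψ j → i = j)
    {i : ℕ} (hi : i < a) {x y : ℕ ⊕ ℕ ⊕ ℕ}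
    (hx : cT φ ψ i x) (h : cStep a b φ ψ x y) : cT φ ψ i y := by
  rcases h with ⟨x', y', hx', hy', j, hj, hxx, hyy⟩ | ⟨x', y', hx', hy', j, hj, hxx, hyy⟩
  · -- step through `gFun a φ` (left–middle)
    subst hx'; subst hy'
    have hji : j = i := by
      rcases hxx with rfl | rfl
      · rcases hx with h' | h' | h'
        · simp at h'; exact h'
        · simp [Sum.map] at h'
        · simp [Sum.map] at h'
      · rcases hx with h' | h' | h'
        · simp [Sum.map] at h'
        · simp at h'
          exact hφi _ _ hj hi h'
        · simp [Sum.map] at h'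
    subst hji
    rcases hyy with rfl | rfl
    · exact Or.inl rfl
    · exact Or.inr (Or.inl rfl)
  · -- step through `gFun b ψ` (middle–right)
    subst hx'; subst hy'
    have hji : j = φ i := by
      rcases hxx with rfl | rfl
      · rcases hx with h' | h' | h'
        · simp at h'
        · simp only [Sum.inr.injEq, Sum.inl.injEq] at h'; exact h'
        · simp at h'
      · rcases hx with h' | h' | h'
        · simp at h'
        · simp at h'
        · simp only [Sum.inr.injEq] at h'
          exact hψi _ _ hj (hφ _ hi) h'
    subst hji
    rcases hyy with rfl | rfl
    · exact Or.inr (Or.inl rfl)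
    · exact Or.inr (Or.inr rfl)

private lemma cT_reach (hφ : ∀ i, i < a → φ i < b)
    (hφi : ∀ i j, i < a → j < a → φ i = φ j → i = j)
    (hψi : ∀ i j, i < b → j < b → ψ i = ψ j → i = j)
    {i : ℕ} (hi : i < a) {x y : ℕ ⊕ ℕ ⊕ ℕ}
    (hx : cT φ ψ i x) (h : Relation.ReflTransGen (cStep a b φ ψ) x y) : cT φ ψ i y := by
  induction h with
  | refl => exact hx
  | tail _ hstep ih => exact cT_step hφ hφi hψi hi ih hstep

private lemma cStep_inl {n : ℕ} {y : ℕ ⊕ ℕ ⊕ ℕ} (h : cStep a b φ ψ (Sum.inl n) y) :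
    n < a := by
  rcases h with ⟨x', y', hx', hy', j, hj, hxx, hyy⟩ | ⟨x', y', hx', hy', j, hj, hxx, hyy⟩
  · rcases hxx with rfl | rfl
    · simp at hx'; omega
    · simp [Sum.map] at hx'
  · simp at hx'

private lemma cStep_inr {m : ℕ} {y : ℕ ⊕ ℕ ⊕ ℕ}
    (h : cStep a b φ ψ (Sum.inr (Sum.inr m)) y) : ∃ j, j < b ∧ ψ j = m := by
  rcases h with ⟨x', y', hx', hy', j, hj, hxx, hyy⟩ | ⟨x', y', hx', hy', j, hj, hxx, hyy⟩
  · rcases hxx with rfl | rfl <;> simp [Sum.map] at hx'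
  · rcases hxx with rfl | rfl
    · simp at hx'
    · simp only [Sum.inr.injEq] at hx'
      exact ⟨j, hj, hx'⟩

lemma gComp_fun (hφ : ∀ i, i < a → φ i < b)
    (hφi : ∀ i j, i < a → j < a → φ i = φ j → i = j)
    (hψi : ∀ i j, i < b → j < b → ψ i = ψ j → i = j)
    (hφs : ∀ j, j < b → ∃ i, i < a ∧ φ i = j) (u v : ℕ ⊕ ℕ) :
    gComp (gFun b ψ) (gFun a φ) u v ↔ gFun a (fun i => ψ (φ i)) u v := by
  constructor
  · intro h
    obtain ⟨c, h1, h2⟩ := (Relation.TransGen.head'_iff).1 h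
    clear h
    have h1' : cStep a b φ ψ (Sum.map id Sum.inr u) c := h1
    have h2' : Relation.ReflTransGen (cStep a b φ ψ) c (Sum.map id Sum.inr v) := h2
    clear h1 h2
    have hex : ∃ i, i < a ∧ cT φ ψ i (Sum.map id Sum.inr u) ∧
        ((u = Sum.inl i) ∨ (u = Sum.inr (ψ (φ i)))) := by
      rcases u with n | m
      · exact ⟨n, cStep_inl h1', Or.inl rfl, Or.inl rfl⟩
      · obtain ⟨j, hj, hjm⟩ := cStep_inr h1'
        obtain ⟨i, hi, rfl⟩ := hφs j hj
        exact ⟨i, hi, Or.inr (Or.inr (by simp [Sum.map, hjm])), Or.inr (by rw [hjm])⟩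
    obtain ⟨i, hi, hTu, hu⟩ := hex
    have hTc : cT φ ψ i c := cT_step hφ hφi hψi hi hTu h1'
    have hTv : cT φ ψ i (Sum.map id Sum.inr v) := cT_reach hφ hφi hψi hi hTc h2'
    refine ⟨i, hi, hu, ?_⟩
    rcases v with k | m
    · rcases hTv with h' | h' | h'
      · simp at h'
        exact Or.inl (by rw [h'])
      · simp [Sum.map] at h'
      · simp [Sum.map] at h'
    · rcases hTv with h' | h' | h'
      · simp [Sum.map] at h'
      · simp [Sum.map] at h'
      · simp at h'
        exact Or.inr (by rw [h'])
  · rintro ⟨i, hi, hu, hv⟩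
    have sLL : cStep a b φ ψ (Sum.inl i) (Sum.inl i) :=
      Or.inl ⟨Sum.inl i, Sum.inl i, rfl, rfl, i, hi, Or.inl rfl, Or.inl rfl⟩
    have sLM : cStep a b φ ψ (Sum.inl i) (Sum.inr (Sum.inl (φ i))) :=
      Or.inl ⟨Sum.inl i, Sum.inr (φ i), rfl, rfl, i, hi, Or.inl rfl, Or.inr rfl⟩
    have sML : cStep a b φ ψ (Sum.inr (Sum.inl (φ i))) (Sum.inl i) :=
      Or.inl ⟨Sum.inr (φ i), Sum.inl i, rfl, rfl, i, hi, Or.inr rfl, Or.inl rfl⟩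
    have sMR : cStep a b φ ψ (Sum.inr (Sum.inl (φ i))) (Sum.inr (Sum.inr (ψ (φ i)))) :=
      Or.inr ⟨Sum.inl (φ i), Sum.inr (ψ (φ i)), rfl, rfl, φ i, hφ i hi, Or.inl rfl, Or.inr rfl⟩
    have sRM : cStep a b φ ψ (Sum.inr (Sum.inr (ψ (φ i)))) (Sum.inr (Sum.inl (φ i))) :=
      Or.inr ⟨Sum.inr (ψ (φ i)), Sum.inl (φ i), rfl, rfl, φ i, hφ i hi, Or.inr rfl, Or.inl rfl⟩
    have sRR : cStep a b φ ψ (Sum.inr (Sum.inr (ψ (φ i)))) (Sum.inr (Sum.inr (ψ (φ i)))) :=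
      Or.inr ⟨Sum.inr (ψ (φ i)), Sum.inr (ψ (φ i)), rfl, rfl, φ i, hφ i hi, Or.inr rfl, Or.inr rfl⟩
    rcases hu with rfl | rfl <;> rcases hv with rfl | rfl
    · exact Relation.TransGen.single sLL
    · exact (Relation.TransGen.single sLM).tail sMR
    · exact (Relation.TransGen.single sRM).tail sML
    · exact Relation.TransGen.single sRR
end Comp
/-- The main induction: `G f` is the split equivalence of a bijective matching that
maps conjunct occurrences to conjunct occurrences and pulls disjunct occurrences
back to disjunct occurrences. -/
theorem Term.G_fun {P : Type} : ∀ {A B : Form P} (f : Term P A B), ∃ φ : ℕ → ℕ,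
    (∀ i, i < A.size → φ i < B.size) ∧
    (∀ i j, i < A.size → j < A.size → φ i = φ j → i = j) ∧
    (∀ j, j < B.size → ∃ i, i < A.size ∧ φ i = j) ∧
    (∀ i, i < A.size → (A.cc i → B.cc (φ i)) ∧ (B.dc (φ i) → A.dc i)) ∧
    (∀ u v, f.G u v ↔ gFun A.size φ u v) := by
  intro A B f
  induction f with
  | id A =>
      exact ⟨fun i => i, fun i hi => hi, fun i j _ _ h => h, fun j hj => ⟨j, hj, rfl⟩,
        fun i hi => ⟨fun h => h, fun h => h⟩, fun u v => Iff.rfl⟩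
  | comp g f ihg ihf =>
      obtain ⟨ψ, hψb, hψi, hψs, hψinv, hψG⟩ := ihg
      obtain ⟨φ, hφb, hφi, hφs, hφinv, hφG⟩ := ihf
      refine ⟨fun i => ψ (φ i), fun i hi => hψb _ (hφb _ hi),
        fun i j hi hj h => hφi _ _ hi hj (hψi _ _ (hφb _ hi) (hφb _ hj) h),
        fun k hk => ?_, fun i hi => ⟨fun h => (hψinv _ (hφb _ hi)).1 ((hφinv _ hi).1 h),
          fun h => (hφinv _ hi).2 ((hψinv _ (hφb _ hi)).2 h)⟩, fun u v => ?_⟩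
      · obtain ⟨j, hj, rfl⟩ := hψs k hk
        obtain ⟨i, hi, rfl⟩ := hφs j hj
        exact ⟨i, hi, rfl⟩
      · exact (gComp_congr hψG hφG u v).trans (gComp_fun hφb hφi hψi hφs u v)
  | @conj A B D E f g ihf ihg =>
      obtain ⟨φ, hφb, hφi, hφs, hφinv, hφG⟩ := ihf
      obtain ⟨ψ, hψb, hψi, hψs, hψinv, hψG⟩ := ihg
      have hAD := f.size_eq
      have hBE := g.size_eq
      refine ⟨fun i => if i < A.size then φ i else ψ (i - A.size) + D.size,
        ?_, ?_, ?_, ?_, fun u v =>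
          (gPar_congr A.size D.size hφG hψG u v).trans (gPar_fun A.size B.size D.size φ ψ u v)⟩
      · intro i hi; simp only [Form.size] at hi ⊢
        split_ifs with h
        · have := hφb i h; omega
        · have := hψb (i - A.size) (by omega); omega
      · intro i j hi hj h
        simp only [Form.size] at hi hj
        dsimp only [] at h
        split_ifs at h with h1 h2 h2
        · exact hφi _ _ h1 h2 h
        · have := hφb i h1; have := hψb (j - A.size) (by omega); omega
        · have := hφb j h2; have := hψb (i - A.size) (by omega); omega
        · have h' : ψ (i - A.size) = ψ (j - A.size) := by omega
          have := hψi _ _ (by omega) (by omega) h'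
          omega
      · intro k hk; simp only [Form.size] at hk ⊢
        by_cases hkD : k < D.size
        · obtain ⟨i, hi, rfl⟩ := hφs k hkD
          exact ⟨i, by omega, by rw [if_pos hi]⟩
        · obtain ⟨i, hi, hik⟩ := hψs (k - D.size) (by omega)
          refine ⟨i + A.size, by omega, ?_⟩
          rw [if_neg (by omega), Nat.add_sub_cancel, hik]
          omega
      · intro i hi; simp only [Form.size] at hi
        by_cases h : i < A.size
        · have hb := hφb i h
          simp only [if_pos h]
          constructor
          · intro hc
            simp only [Form.cc] at hc ⊢
            rw [if_pos h] at hc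
            rw [if_pos hb]
            rcases hc with hL | hcc
            · exact Or.inl (Form.size_isL (by rw [← hAD]; exact Form.isL_size hL))
            · exact Or.inr ((hφinv i h).1 hcc)
          · intro hd
            simp only [Form.dc] at hd ⊢
            rw [if_pos hb] at hd
            rw [if_pos h]
            exact (hφinv i h).2 hd
        · have hiB : i - A.size < B.size := by omega
          have hb := hψb _ hiB
          have hneg : ¬ (ψ (i - A.size) + D.size < D.size) := by omega
          simp only [if_neg h]
          constructor
          · intro hc
            simp only [Form.cc] at hc ⊢
            rw [if_neg h] at hc
            rw [if_neg hneg, Nat.add_sub_cancel]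
            refine ⟨hb, ?_⟩
            rcases hc.2 with hL | hcc
            · exact Or.inl (Form.size_isL (by rw [← hBE]; exact Form.isL_size hL))
            · exact Or.inr ((hψinv _ hiB).1 hcc)
          · intro hd
            simp only [Form.dc] at hd ⊢
            rw [if_neg hneg, Nat.add_sub_cancel] at hd
            rw [if_neg h]
            exact (hψinv _ hiB).2 hd
  | @disj A B D E f g ihf ihg =>
      obtain ⟨φ, hφb, hφi, hφs, hφinv, hφG⟩ := ihf
      obtain ⟨ψ, hψb, hψi, hψs, hψinv, hψG⟩ := ihg
      have hAD := f.size_eq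
      have hBE := g.size_eq
      refine ⟨fun i => if i < A.size then φ i else ψ (i - A.size) + D.size,
        ?_, ?_, ?_, ?_, fun u v =>
          (gPar_congr A.size D.size hφG hψG u v).trans (gPar_fun A.size B.size D.size φ ψ u v)⟩
      · intro i hi; simp only [Form.size] at hi ⊢
        split_ifs with h
        · have := hφb i h; omega
        · have := hψb (i - A.size) (by omega); omega
      · intro i j hi hj h
        simp only [Form.size] at hi hj
        dsimp only [] at h
        split_ifs at h with h1 h2 h2
        · exact hφi _ _ h1 h2 h
        · have := hφb i h1; have := hψb (j - A.size) (by omega); omega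
        · have := hφb j h2; have := hψb (i - A.size) (by omega); omega
        · have h' : ψ (i - A.size) = ψ (j - A.size) := by omega
          have := hψi _ _ (by omega) (by omega) h'
          omega
      · intro k hk; simp only [Form.size] at hk ⊢
        by_cases hkD : k < D.size
        · obtain ⟨i, hi, rfl⟩ := hφs k hkD
          exact ⟨i, by omega, by rw [if_pos hi]⟩
        · obtain ⟨i, hi, hik⟩ := hψs (k - D.size) (by omega)
          refine ⟨i + A.size, by omega, ?_⟩
          rw [if_neg (by omega), Nat.add_sub_cancel, hik]
          omega
      · intro i hi; simp only [Form.size] at hi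
        by_cases h : i < A.size
        · have hb := hφb i h
          simp only [if_pos h]
          constructor
          · intro hc
            simp only [Form.cc] at hc ⊢
            rw [if_pos h] at hc
            rw [if_pos hb]
            exact (hφinv i h).1 hc
          · intro hd
            simp only [Form.dc] at hd ⊢
            rw [if_pos hb] at hd
            rw [if_pos h]
            rcases hd with hL | hdd
            · exact Or.inl (Form.size_isL (by rw [hAD]; exact Form.isL_size hL))
            · exact Or.inr ((hφinv i h).2 hdd)
        · have hiB : i - A.size < B.size := by omega
          have hb := hψb _ hiB
          have hneg : ¬ (ψ (i - A.size) + D.size < D.size) := by omega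
          simp only [if_neg h]
          constructor
          · intro hc
            simp only [Form.cc] at hc ⊢
            rw [if_neg h] at hc
            rw [if_neg hneg, Nat.add_sub_cancel]
            exact (hψinv _ hiB).1 hc
          · intro hd
            simp only [Form.dc] at hd ⊢
            rw [if_neg hneg, Nat.add_sub_cancel] at hd
            rw [if_neg h]
            rcases hd.2 with hL | hdd
            · refine ⟨by omega, Or.inl (Form.size_isL (by rw [hBE]; exact Form.isL_size hL))⟩
            · exact ⟨by omega, Or.inr ((hψinv _ hiB).2 hdd)⟩
  | bConjTo A B C =>
      refine ⟨fun i => i, fun i hi => by simp only [Form.size] at hi ⊢; omega,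
        fun i j _ _ h => h, fun j hj => ⟨j, by simp only [Form.size] at hj ⊢; omega, rfl⟩,
        fun i hi => ⟨fun h => Form.cc_assoc_conj.mp h, fun h => Form.dc_assoc_conj.mpr h⟩,
        fun u v => Iff.rfl⟩
  | bConjFrom A B C =>
      refine ⟨fun i => i, fun i hi => by simp only [Form.size] at hi ⊢; omega,
        fun i j _ _ h => h, fun j hj => ⟨j, by simp only [Form.size] at hj ⊢; omega, rfl⟩,
        fun i hi => ⟨fun h => Form.cc_assoc_conj.mpr h, fun h => Form.dc_assoc_conj.mp h⟩,
        fun u v => Iff.rfl⟩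
  | bDisjTo A B C =>
      refine ⟨fun i => i, fun i hi => by simp only [Form.size] at hi ⊢; omega,
        fun i j _ _ h => h, fun j hj => ⟨j, by simp only [Form.size] at hj ⊢; omega, rfl⟩,
        fun i hi => ⟨fun h => Form.cc_assoc_disj.mp h, fun h => Form.dc_assoc_disj.mpr h⟩,
        fun u v => Iff.rfl⟩
  | bDisjFrom A B C =>
      refine ⟨fun i => i, fun i hi => by simp only [Form.size] at hi ⊢; omega,
        fun i j _ _ h => h, fun j hj => ⟨j, by simp only [Form.size] at hj ⊢; omega, rfl⟩,
        fun i hi => ⟨fun h => Form.cc_assoc_disj.mpr h, fun h => Form.dc_assoc_disj.mp h⟩,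
        fun u v => Iff.rfl⟩
  | cConj A B =>
      refine ⟨fun i => if i < A.size then i + B.size else i - A.size,
        ?_, ?_, ?_, ?_, fun u v => Iff.rfl⟩
      · intro i hi; simp only [Form.size] at hi ⊢; split_ifs <;> omega
      · intro i j hi hj h; simp only [Form.size] at hi hj; dsimp only [] at h; split_ifs at h <;> omega
      · intro j hj; simp only [Form.size] at hj ⊢
        by_cases h : j < B.size
        · exact ⟨j + A.size, by omega, by rw [if_neg (by omega)]; omega⟩
        · exact ⟨j - B.size, by omega, by rw [if_pos (by omega)]; omega⟩
      · intro i hi; simp only [Form.size] at hi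
        exact ⟨fun h => (Form.cc_comm_conj hi).mp h, fun h => (Form.dc_comm_conj hi).mpr h⟩
  | cDisj A B =>
      refine ⟨fun i => if i < B.size then i + A.size else i - B.size,
        ?_, ?_, ?_, ?_, fun u v => Iff.rfl⟩
      · intro i hi; simp only [Form.size] at hi ⊢; split_ifs <;> omega
      · intro i j hi hj h; simp only [Form.size] at hi hj; dsimp only [] at h; split_ifs at h <;> omega
      · intro j hj; simp only [Form.size] at hj ⊢
        by_cases h : j < A.size
        · exact ⟨j + B.size, by omega, by rw [if_neg (by omega)]; omega⟩
        · exact ⟨j - A.size, by omega, by rw [if_pos (by omega)]; omega⟩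
      · intro i hi; simp only [Form.size] at hi
        exact ⟨fun h => (Form.cc_comm_disj hi).mp h, fun h => (Form.dc_comm_disj hi).mpr h⟩
  | d A B C =>
      refine ⟨fun i => i, fun i hi => by simp only [Form.size] at hi ⊢; omega,
        fun i j _ _ h => h, fun j hj => ⟨j, by simp only [Form.size] at hj ⊢; omega, rfl⟩,
        fun i hi => ⟨fun h => Form.cc_d h, fun h => Form.dc_d h⟩,
        fun u v => Iff.rfl⟩
namespace Form
variable {P : Type}

lemma offsetAt_append : ∀ (π : List Dir) (σ : List Dir) (A C : Form P),
    A.subAt π = some C → A.offsetAt (π ++ σ) = A.offsetAt π + C.offsetAt σ := by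
  intro π
  induction π with
  | nil =>
      intro σ A C h
      obtain rfl : A = C := by simpa [Form.subAt] using h
      simp [Form.offsetAt]
  | cons d π ih =>
      intro σ A C h
      cases A with
      | letter q => simp [Form.subAt] at h
      | conj A B =>
          cases d with
          | l =>
              simp only [Form.subAt] at h
              simp only [List.cons_append, Form.offsetAt]
              exact ih σ A C h
          | r =>
              simp only [Form.subAt] at h
              simp only [List.cons_append, Form.offsetAt]
              rw [ih σ B C h]; omega
      | disj A B =>
          cases d with
          | l =>
              simp only [Form.subAt] at h
              simp only [List.cons_append, Form.offsetAt]
              exact ih σ A C h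
          | r =>
              simp only [Form.subAt] at h
              simp only [List.cons_append, Form.offsetAt]
              rw [ih σ B C h]; omega

lemma cc_subAt : ∀ (π : List Dir) (A C : Form P),
    A.subAt π = some C → ∀ k, C.cc k → A.cc (A.offsetAt π + k) := by
  intro π
  induction π with
  | nil =>
      intro A C h k hk
      obtain rfl : A = C := by simpa [Form.subAt] using h
      simpa [Form.offsetAt] using hk
  | cons d π ih =>
      intro A C h k hk
      cases A with
      | letter q => simp [Form.subAt] at h
      | conj A B =>
          cases d with
          | l =>
              simp only [Form.subAt] at h
              have hcc := ih A C h k hk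
              have hlt := Form.cc_lt hcc
              simp only [Form.offsetAt, Form.cc]
              simp only [hlt, ↓reduceIte]
              exact Or.inr hcc
          | r =>
              simp only [Form.subAt] at h
              have hcc := ih B C h k hk
              have hlt := Form.cc_lt hcc
              have harith : A.size + B.offsetAt π + k = A.size + (B.offsetAt π + k) := by omega
              simp only [Form.offsetAt]
              rw [harith]
              simp only [Form.cc]
              rw [if_neg (by omega), Nat.add_sub_cancel_left]
              exact ⟨hlt, Or.inr hcc⟩
      | disj A B =>
          cases d with
          | l =>
              simp only [Form.subAt] at h
              have hcc := ih A C h k hk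
              have hlt := Form.cc_lt hcc
              simp only [Form.offsetAt, Form.cc]
              simp only [hlt, ↓reduceIte]
              exact hcc
          | r =>
              simp only [Form.subAt] at h
              have hcc := ih B C h k hk
              have harith : A.size + B.offsetAt π + k = A.size + (B.offsetAt π + k) := by omega
              simp only [Form.offsetAt]
              rw [harith]
              simp only [Form.cc]
              rw [if_neg (by omega), Nat.add_sub_cancel_left]
              exact hcc

lemma dc_subAt : ∀ (π : List Dir) (A C : Form P),
    A.subAt π = some C → ∀ k, C.dc k → A.dc (A.offsetAt π + k) := by
  intro π
  induction π with
  | nil =>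
      intro A C h k hk
      obtain rfl : A = C := by simpa [Form.subAt] using h
      simpa [Form.offsetAt] using hk
  | cons d π ih =>
      intro A C h k hk
      cases A with
      | letter q => simp [Form.subAt] at h
      | disj A B =>
          cases d with
          | l =>
              simp only [Form.subAt] at h
              have hcc := ih A C h k hk
              have hlt := Form.dc_lt hcc
              simp only [Form.offsetAt, Form.dc]
              simp only [hlt, ↓reduceIte]
              exact Or.inr hcc
          | r =>
              simp only [Form.subAt] at h
              have hcc := ih B C h k hk
              have hlt := Form.dc_lt hcc
              have harith : A.size + B.offsetAt π + k = A.size + (B.offsetAt π + k) := by omega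
              simp only [Form.offsetAt]
              rw [harith]
              simp only [Form.dc]
              rw [if_neg (by omega), Nat.add_sub_cancel_left]
              exact ⟨hlt, Or.inr hcc⟩
      | conj A B =>
          cases d with
          | l =>
              simp only [Form.subAt] at h
              have hcc := ih A C h k hk
              have hlt := Form.dc_lt hcc
              simp only [Form.offsetAt, Form.dc]
              simp only [hlt, ↓reduceIte]
              exact hcc
          | r =>
              simp only [Form.subAt] at h
              have hcc := ih B C h k hk
              have harith : A.size + B.offsetAt π + k = A.size + (B.offsetAt π + k) := by omega
              simp only [Form.offsetAt]
              rw [harith]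
              simp only [Form.dc]
              rw [if_neg (by omega), Nat.add_sub_cancel_left]
              exact hcc

end Form
/-- **Lemma 2**: let `f : A ⊢ B` be an arrow term of DS such that an occurrence
`x` of a letter `p` in `A` is linked in `f` to an occurrence `y` of `p` in `B`.
Then it is impossible that `A` has a subformula occurrence of the form `x∧A′` or
`A′∧x` and `B` has a subformula occurrence of the form `y∨B′` or `B′∨y`. -/
theorem lemma_2 {P : Type} {A B : Form P} (f : Term P A B) (p : P)
    (πx πy : List Dir)
    (hx : A.subAt πx = some (Form.letter p)) (hy : B.subAt πy = some (Form.letter p))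
    (hlink : Linked f (A.offsetAt πx) (B.offsetAt πy))
    (hA : ∃ (π : List Dir) (A' : Form P),
      (A.subAt π = some (Form.letter p ⋏ A') ∧ πx = π ++ [Dir.l]) ∨
      (A.subAt π = some (A' ⋏ Form.letter p) ∧ πx = π ++ [Dir.r]))
    (hB : ∃ (ρ : List Dir) (B' : Form P),
      (B.subAt ρ = some (Form.letter p ⋎ B') ∧ πy = ρ ++ [Dir.l]) ∨
      (B.subAt ρ = some (B' ⋎ Form.letter p) ∧ πy = ρ ++ [Dir.r])) :
    False := by
  obtain ⟨φ, hb, hinj, hs, hinv, hG⟩ := Term.G_fun f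
  obtain ⟨i, hi, hu, hv⟩ := (hG _ _).1 hlink
  rcases hu with hu | hu
  swap
  · exact absurd hu (by simp)
  rcases hv with hv | hv
  · exact absurd hv (by simp)
  obtain rfl : A.offsetAt πx = i := Sum.inl.inj hu
  have hy' : B.offsetAt πy = φ (A.offsetAt πx) := Sum.inr.inj hv
  have hccA : A.cc (A.offsetAt πx) := by
    obtain ⟨π, A', hcase | hcase⟩ := hA
    · obtain ⟨hsub, rfl⟩ := hcase
      have h0 : (Form.letter p ⋏ A').cc 0 := by
        simp [Form.cc, Form.size, Form.isL]
      have hcc := Form.cc_subAt π A _ hsub 0 h0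
      rw [Form.offsetAt_append π [Dir.l] A _ hsub]
      simpa [Form.offsetAt] using hcc
    · obtain ⟨hsub, rfl⟩ := hcase
      have h0 : (A' ⋏ Form.letter p).cc A'.size := by
        simp [Form.cc, Form.size, Form.isL]
      have hcc := Form.cc_subAt π A _ hsub A'.size h0
      rw [Form.offsetAt_append π [Dir.r] A _ hsub]
      simpa [Form.offsetAt] using hcc
  have hdcB : B.dc (B.offsetAt πy) := by
    obtain ⟨ρ, B', hcase | hcase⟩ := hB
    · obtain ⟨hsub, rfl⟩ := hcase
      have h0 : (Form.letter p ⋎ B').dc 0 := by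
        simp [Form.dc, Form.size, Form.isL]
      have hdc := Form.dc_subAt ρ B _ hsub 0 h0
      rw [Form.offsetAt_append ρ [Dir.l] B _ hsub]
      simpa [Form.offsetAt] using hdc
    · obtain ⟨hsub, rfl⟩ := hcase
      have h0 : (B' ⋎ Form.letter p).dc B'.size := by
        simp [Form.dc, Form.size, Form.isL]
      have hdc := Form.dc_subAt ρ B _ hsub B'.size h0
      rw [Form.offsetAt_append ρ [Dir.r] B _ hsub]
      simpa [Form.offsetAt] using hdc
  rw [hy'] at hdcB
  exact Form.not_cc_dc B _ ((hinv _ hi).1 hccA) hdcB
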